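/- Let n ≥ 1 and let a : Fin n → ℝ be a time series. The visibility graph of a, i.e. the simple graph on Fin n in which two distinct indices i and j are adjacent exactly when min i j and max i j are mutually visible in a, is a connected graph. -/

import Mathlib

/-- Two indices `i < j` of a time series `a : Fin n → ℝ` are mutually visible if every
intermediate point lies strictly below the line joining `(i, a i)` and `(j, a j)`. -/
def MutuallyVisible {n : ℕ} (a : Fin n → ℝ) (i j : Fin n) : Prop :=
  ∀ k : Fin n, (i : ℕ) < (k : ℕ) → (k : ℕ) < (j : ℕ) →
    a k < a j + (a i - a j) *
      ((((j : ℕ) : ℝ) - ((k : ℕ) : ℝ)) / (((j : ℕ) : ℝ) - ((i : ℕ) : ℝ)))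

/-- The visibility graph of a time series: two distinct indices are adjacent exactly
when the smaller and the larger are mutually visible. -/
def visibilityGraph {n : ℕ} (a : Fin n → ℝ) : SimpleGraph (Fin n) where
  Adj i j := i ≠ j ∧ MutuallyVisible a (min i j) (max i j)
  symm := by
    constructor
    intro i j hij
    exact ⟨hij.1.symm, by rw [min_comm, max_comm]; exact hij.2⟩
  loopless := by
    constructor
    intro i hi
    exact hi.1 rfl

/-- The visibility graph of a (nonempty) time series is connected. -/
theorem visibilityGraph_connected {n : ℕ} (hn : 1 ≤ n) (a : Fin n → ℝ) :
    (visibilityGraph a).Connected := by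
  rw [SimpleGraph.connected_iff]
  refine ⟨?_, ⟨⟨0, hn⟩⟩⟩
  have key : ∀ m : ℕ, ∀ h : m < n, (visibilityGraph a).Reachable ⟨0, hn⟩ ⟨m, h⟩ := by
    intro m
    induction m with
    | zero => intro h; exact SimpleGraph.Reachable.refl _
    | succ k ih =>
      intro h
      have hk : k < n := Nat.lt_of_succ_lt h
      refine (ih hk).trans (SimpleGraph.Adj.reachable ?_)
      refine ⟨by simp [Fin.ext_iff], ?_⟩
      have hlt : (⟨k, hk⟩ : Fin n) < ⟨k + 1, h⟩ := by simp [Fin.lt_def]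
      rw [min_eq_left hlt.le, max_eq_right hlt.le]
      intro l hl1 hl2
      simp only [Fin.val_mk] at hl1 hl2
      omega
  intro i j
  have hi := key i.1 i.2
  have hj := key j.1 j.2
  simp only [Fin.eta] at hi hj
  exact hi.symm.trans hj
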